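/- The ring C = k[x_n : n ∈ ℤ]/(x_n² + n = x_m² + m) is an integral domain. -/

import Mathlib

open Polynomial

noncomputable section

namespace WeylAux

variable {R S : Type} [CommRing R] [CommRing S]

/-- The quadratic `X ^ 2 - C d`. -/
def quad (d : R) : R[X] := X ^ 2 - C d

lemma quad_monic (d : R) : (quad d).Monic := monic_X_pow_sub_C d (by norm_num)

lemma quad_degree [Nontrivial R] (d : R) : (quad d).degree = 2 :=
  degree_X_pow_sub_C (by norm_num) d

lemma root_sq (d : R) :
    (AdjoinRoot.root (quad d)) ^ 2 = AdjoinRoot.of (quad d) d := by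
  have h := AdjoinRoot.mk_self (f := quad d)
  have : AdjoinRoot.mk (quad d) (X ^ 2 - C d) = 0 := h
  rw [map_sub, map_pow, AdjoinRoot.mk_X, sub_eq_zero] at this
  rw [this]; rfl

lemma deg_lin_le (a b : R) : (C a + C b * X).degree ≤ 1 := by
  refine Polynomial.degree_add_le_of_degree_le (n := 1) (degree_C_le.trans zero_le_one) ?_
  refine (degree_mul_le _ _).trans ?_
  refine le_trans (add_le_add degree_C_le le_rfl) ?_
  simpa using Polynomial.degree_X_le

lemma rep_exists [Nontrivial R] (d : R) (z : AdjoinRoot (quad d)) :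
    ∃ a b : R, z = AdjoinRoot.of (quad d) a
      + AdjoinRoot.of (quad d) b * AdjoinRoot.root (quad d) := by
  obtain ⟨p, rfl⟩ := AdjoinRoot.mk_surjective (g := quad d) z
  refine ⟨(p %ₘ quad d).coeff 0, (p %ₘ quad d).coeff 1, ?_⟩
  have hmk : AdjoinRoot.mk (quad d) p = AdjoinRoot.mk (quad d) (p %ₘ quad d) := by
    rw [Polynomial.modByMonic_eq_sub_mul_div p (quad d), map_sub, map_mul,
      AdjoinRoot.mk_self, zero_mul, sub_zero]
  have hdeg : (p %ₘ quad d).degree ≤ 1 := by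
    have h2 := Polynomial.degree_modByMonic_lt p (quad_monic d)
    rw [quad_degree d] at h2
    exact Order.le_of_lt_succ (by exact_mod_cast h2)
  have hrep := Polynomial.eq_X_add_C_of_degree_le_one hdeg
  conv_lhs => rw [hmk, hrep]
  rw [map_add, map_mul, AdjoinRoot.mk_X, AdjoinRoot.mk_C, AdjoinRoot.mk_C]
  ring

lemma rep_unique [Nontrivial R] {d a b : R}
    (h : AdjoinRoot.of (quad d) a + AdjoinRoot.of (quad d) b * AdjoinRoot.root (quad d) = 0) :
    a = 0 ∧ b = 0 := by
  have hmk : AdjoinRoot.mk (quad d) (C a + C b * X) = 0 := by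
    rw [map_add, map_mul, AdjoinRoot.mk_X, AdjoinRoot.mk_C, AdjoinRoot.mk_C]; exact h
  rw [AdjoinRoot.mk_eq_zero] at hmk
  have hz : C a + C b * X = 0 := by
    by_contra hne
    refine (quad_monic d).not_dvd_of_degree_lt hne ?_ hmk
    rw [quad_degree d]
    exact lt_of_le_of_lt (deg_lin_le a b) (by norm_num)
  constructor
  · have := congrArg (fun q => Polynomial.coeff q 0) hz; simpa using this
  · have := congrArg (fun q => Polynomial.coeff q 1) hz; simpa using this

end WeylAux

noncomputable section

namespace WeylAux

variable {R S : Type} [CommRing R] [CommRing S]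

lemma of_injective [Nontrivial R] (d : R) :
    Function.Injective (AdjoinRoot.of (quad d)) := by
  rw [injective_iff_map_eq_zero]
  intro c hc
  have h : AdjoinRoot.of (quad d) c
      + AdjoinRoot.of (quad d) 0 * AdjoinRoot.root (quad d) = 0 := by
    simpa using hc
  exact (rep_unique h).1

lemma sq_rep {d a b : R} :
    (AdjoinRoot.of (quad d) a + AdjoinRoot.of (quad d) b * AdjoinRoot.root (quad d)) ^ 2
      = AdjoinRoot.of (quad d) (a ^ 2 + b ^ 2 * d)
        + AdjoinRoot.of (quad d) (2 * a * b) * AdjoinRoot.root (quad d) := by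
  have hr := root_sq d
  have hlhs : (AdjoinRoot.of (quad d) a + AdjoinRoot.of (quad d) b * AdjoinRoot.root (quad d)) ^ 2
      = AdjoinRoot.of (quad d) a ^ 2 + AdjoinRoot.of (quad d) b ^ 2 * AdjoinRoot.root (quad d) ^ 2
        + 2 * (AdjoinRoot.of (quad d) a * (AdjoinRoot.of (quad d) b * AdjoinRoot.root (quad d))) := by
    ring
  rw [hlhs, hr, map_add, map_mul, map_mul, map_mul, map_pow, map_pow, map_ofNat]
  ring

lemma rep_unique' [Nontrivial R] {d a b a' b' : R}
    (h : AdjoinRoot.of (quad d) a + AdjoinRoot.of (quad d) b * AdjoinRoot.root (quad d)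
       = AdjoinRoot.of (quad d) a' + AdjoinRoot.of (quad d) b' * AdjoinRoot.root (quad d)) :
    a = a' ∧ b = b' := by
  have h0 : AdjoinRoot.of (quad d) (a - a')
      + AdjoinRoot.of (quad d) (b - b') * AdjoinRoot.root (quad d) = 0 := by
    rw [map_sub, map_sub, sub_mul]
    rw [← sub_eq_zero] at h
    rw [← h]; ring
  obtain ⟨h1, h2⟩ := rep_unique h0
  exact ⟨sub_eq_zero.mp h1, sub_eq_zero.mp h2⟩

variable {F : Type} [Field F]

lemma isField_adjoinRoot_quad {d : F} (hd : ¬ IsSquare d) :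
    IsField (AdjoinRoot (quad d)) := by
  refine ⟨?_, mul_comm, ?_⟩
  · refine ⟨0, 1, fun h => ?_⟩
    have h' : AdjoinRoot.of (quad d) 1
        + AdjoinRoot.of (quad d) 0 * AdjoinRoot.root (quad d) = 0 := by simpa using h.symm
    exact one_ne_zero (rep_unique h').1
  · intro z hz
    obtain ⟨a, b, rfl⟩ := rep_exists d z
    set N : F := a ^ 2 - b ^ 2 * d with hN
    have hNne : N ≠ 0 := by
      intro h0
      have hab : a ^ 2 = b ^ 2 * d := by rw [hN] at h0; linear_combination h0
      by_cases hb : b = 0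
      · apply hz
        have ha : a = 0 := by
          have h2 : a ^ 2 = 0 := by rw [hab, hb]; ring
          exact pow_eq_zero_iff (by norm_num) |>.mp h2
        simp [ha, hb]
      · exact hd ⟨a / b, by field_simp; linear_combination -hab⟩
    refine ⟨AdjoinRoot.of (quad d) N⁻¹ *
      (AdjoinRoot.of (quad d) a - AdjoinRoot.of (quad d) b * AdjoinRoot.root (quad d)), ?_⟩
    have hkey : (AdjoinRoot.of (quad d) a + AdjoinRoot.of (quad d) b * AdjoinRoot.root (quad d))
        * (AdjoinRoot.of (quad d) a - AdjoinRoot.of (quad d) b * AdjoinRoot.root (quad d))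
        = AdjoinRoot.of (quad d) N := by
      have hr := root_sq d
      have hl : (AdjoinRoot.of (quad d) a + AdjoinRoot.of (quad d) b * AdjoinRoot.root (quad d))
          * (AdjoinRoot.of (quad d) a - AdjoinRoot.of (quad d) b * AdjoinRoot.root (quad d))
          = AdjoinRoot.of (quad d) a ^ 2
            - AdjoinRoot.of (quad d) b ^ 2 * AdjoinRoot.root (quad d) ^ 2 := by ring
      rw [hl, hr, hN, map_sub, map_mul, map_pow, map_pow]
    calc (AdjoinRoot.of (quad d) a + AdjoinRoot.of (quad d) b * AdjoinRoot.root (quad d))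
          * (AdjoinRoot.of (quad d) N⁻¹ *
            (AdjoinRoot.of (quad d) a - AdjoinRoot.of (quad d) b * AdjoinRoot.root (quad d)))
        = AdjoinRoot.of (quad d) N⁻¹ * AdjoinRoot.of (quad d) N := by rw [← hkey]; ring
      _ = 1 := by rw [← map_mul, inv_mul_cancel₀ hNne, map_one]

lemma isSquare_of_quad {d : F} {a : F} (htwo : (2 : F) ≠ 0)
    (h : IsSquare (AdjoinRoot.of (quad d) a)) : IsSquare a ∨ IsSquare (a * d) := by
  obtain ⟨z, hz⟩ := h
  obtain ⟨x, y, rfl⟩ := rep_exists d z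
  rw [← pow_two] at hz
  rw [sq_rep] at hz
  have hz' : AdjoinRoot.of (quad d) a + AdjoinRoot.of (quad d) 0 * AdjoinRoot.root (quad d)
      = AdjoinRoot.of (quad d) (x ^ 2 + y ^ 2 * d)
        + AdjoinRoot.of (quad d) (2 * x * y) * AdjoinRoot.root (quad d) := by
    simpa using hz
  obtain ⟨h1, h2⟩ := rep_unique' hz'
  have hxy : x * y = 0 := by
    have h2' : (2 : F) * (x * y) = 0 := by linear_combination - h2
    rcases mul_eq_zero.mp h2' with h | h
    · exact absurd h htwo
    · exact h
  rcases mul_eq_zero.mp hxy with hx | hy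
  · right
    refine ⟨y * d, ?_⟩
    rw [h1, hx]
    ring
  · left
    refine ⟨x, ?_⟩
    rw [h1, hy]
    ring

lemma lift_quad_injective [Nontrivial S] (g : R →+* S) (hg : Function.Injective g) (d : R)
    (hroot : Polynomial.eval₂ ((AdjoinRoot.of (quad (g d))).comp g)
      (AdjoinRoot.root (quad (g d))) (quad d) = 0) :
    Function.Injective (AdjoinRoot.lift ((AdjoinRoot.of (quad (g d))).comp g)
      (AdjoinRoot.root (quad (g d))) hroot) := by
  haveI : Nontrivial R := g.domain_nontrivial
  rw [injective_iff_map_eq_zero]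
  intro z hz
  obtain ⟨a, b, rfl⟩ := rep_exists d z
  rw [map_add, map_mul, AdjoinRoot.lift_of, AdjoinRoot.lift_of, AdjoinRoot.lift_root] at hz
  have hz' : AdjoinRoot.of (quad (g d)) (g a)
      + AdjoinRoot.of (quad (g d)) (g b) * AdjoinRoot.root (quad (g d)) = 0 := hz
  have h := rep_unique hz'
  have ha : a = 0 := hg (by rw [h.1, map_zero])
  have hb : b = 0 := hg (by rw [h.2, map_zero])
  simp [ha, hb]

lemma quad_eval₂_zero (g : R →+* S) (d : R) :
    Polynomial.eval₂ ((AdjoinRoot.of (quad (g d))).comp g)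
      (AdjoinRoot.root (quad (g d))) (quad d) = 0 := by
  have : quad d = Polynomial.X ^ 2 - Polynomial.C d := rfl
  rw [this, Polynomial.eval₂_sub, Polynomial.eval₂_pow, Polynomial.eval₂_X, Polynomial.eval₂_C,
    root_sq]
  simp

end WeylAux

noncomputable section

namespace WeylAux

variable {R S : Type} [CommRing R] [CommRing S]

/-- Lift a ring hom to adjoined quadratic roots. -/
def liftQuad (g : R →+* S) (d : R) (e : S) (he : g d = e) :
    AdjoinRoot (quad d) →+* AdjoinRoot (quad e) :=
  AdjoinRoot.lift ((AdjoinRoot.of (quad e)).comp g) (AdjoinRoot.root (quad e))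
    (by subst he; exact quad_eval₂_zero g d)

lemma liftQuad_of (g : R →+* S) (d : R) (e : S) (he : g d = e) (a : R) :
    liftQuad g d e he (AdjoinRoot.of (quad d) a) = AdjoinRoot.of (quad e) (g a) :=
  AdjoinRoot.lift_of _

lemma liftQuad_root (g : R →+* S) (d : R) (e : S) (he : g d = e) :
    liftQuad g d e he (AdjoinRoot.root (quad d)) = AdjoinRoot.root (quad e) :=
  AdjoinRoot.lift_root _

lemma liftQuad_injective [Nontrivial S] (g : R →+* S) (hg : Function.Injective g)
    (d : R) (e : S) (he : g d = e) : Function.Injective (liftQuad g d e he) := by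
  subst he
  exact lift_quad_injective g hg d _

lemma adjoinRoot_quad_nontrivial [Nontrivial R] (d : R) :
    Nontrivial (AdjoinRoot (quad d)) := by
  refine ⟨1, 0, fun h => ?_⟩
  have : AdjoinRoot.of (quad d) 1 = AdjoinRoot.of (quad d) 0 := by
    rw [map_one, map_zero]; exact h
  exact one_ne_zero (of_injective d this)

/-- A commutative ring with a distinguished point. -/
structure RingPt : Type 1 where
  carrier : Type
  [ring : CommRing carrier]
  pt : carrier

attribute [instance] RingPt.ring

/-- One step of the tower: adjoin a root of `X² - (t² - n)`. -/
def stepPt (A : RingPt) (n : ℤ) : RingPt :=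
  ⟨AdjoinRoot (quad (A.pt ^ 2 - (n : A.carrier))), AdjoinRoot.of _ A.pt⟩

/-- The tower of quadratic extensions indexed by a list of integers. -/
def tower (A : RingPt) : List ℤ → RingPt
  | [] => A
  | n :: l => stepPt (tower A l) n

lemma tower_nontrivial (A : RingPt) [Nontrivial A.carrier] :
    ∀ l : List ℤ, Nontrivial (tower A l).carrier
  | [] => ‹_›
  | n :: l => by
    haveI := tower_nontrivial A l
    exact adjoinRoot_quad_nontrivial _

/-- Embedding of the base into the tower. -/
def towerOf (A : RingPt) : (l : List ℤ) → A.carrier →+* (tower A l).carrier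
  | [] => RingHom.id _
  | n :: l => (AdjoinRoot.of _).comp (towerOf A l)

/-- The square roots adjoined in the tower. -/
def rootEl (A : RingPt) : (l : List ℤ) → (i : ℤ) → i ∈ l → (tower A l).carrier
  | n :: l, i, h =>
    if hi : i = n then AdjoinRoot.root _
    else AdjoinRoot.of _ (rootEl A l i ((List.mem_cons.mp h).resolve_left hi))

lemma rootEl_sq (A : RingPt) : ∀ (l : List ℤ) (i : ℤ) (h : i ∈ l),
    (rootEl A l i h) ^ 2 = (tower A l).pt ^ 2 - (i : (tower A l).carrier)
  | n :: l, i, h => by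
    by_cases hi : i = n
    · subst hi
      rw [rootEl]
      erw [dif_pos rfl]
      have := root_sq ((tower A l).pt ^ 2 - (i : (tower A l).carrier))
      have key : (AdjoinRoot.root (quad ((tower A l).pt ^ 2 - (i : (tower A l).carrier))) : AdjoinRoot (quad ((tower A l).pt ^ 2 - (i : (tower A l).carrier)))) ^ 2 = (AdjoinRoot.of (quad ((tower A l).pt ^ 2 - (i : (tower A l).carrier))) (tower A l).pt) ^ 2 - ((i : ℤ) : AdjoinRoot (quad ((tower A l).pt ^ 2 - (i : (tower A l).carrier)))) := by
        rw [this, map_sub, map_pow, map_intCast]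
      exact key
    · rw [rootEl]; erw [dif_neg hi]
      have key : (AdjoinRoot.of (quad ((tower A l).pt ^ 2 - (n : (tower A l).carrier))) (rootEl A l i ((List.mem_cons.mp h).resolve_left hi)) : AdjoinRoot (quad ((tower A l).pt ^ 2 - (n : (tower A l).carrier)))) ^ 2 = (AdjoinRoot.of (quad ((tower A l).pt ^ 2 - (n : (tower A l).carrier))) (tower A l).pt) ^ 2 - ((i : ℤ) : AdjoinRoot (quad ((tower A l).pt ^ 2 - (n : (tower A l).carrier)))) := by
        rw [← map_pow, ← map_pow, rootEl_sq A l i _, map_sub, map_intCast]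
      exact key

/-- Functoriality of the tower. -/
def towerMap (A B : RingPt) (f : A.carrier →+* B.carrier) (hf : f A.pt = B.pt) :
    (l : List ℤ) →
      {g : (tower A l).carrier →+* (tower B l).carrier // g (tower A l).pt = (tower B l).pt}
  | [] => ⟨f, hf⟩
  | n :: l =>
    ⟨liftQuad (towerMap A B f hf l).1 ((tower A l).pt ^ 2 - (n : (tower A l).carrier))
        ((tower B l).pt ^ 2 - (n : (tower B l).carrier))
        (by rw [map_sub, map_pow, (towerMap A B f hf l).2, map_intCast]), by
      show liftQuad _ _ _ _ (AdjoinRoot.of _ (tower A l).pt) = AdjoinRoot.of _ (tower B l).pt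
      rw [liftQuad_of, (towerMap A B f hf l).2]⟩

lemma towerMap_injective (A B : RingPt) [Nontrivial B.carrier]
    (f : A.carrier →+* B.carrier) (hf : f A.pt = B.pt) (hinj : Function.Injective f) :
    ∀ l : List ℤ, Function.Injective (towerMap A B f hf l).1
  | [] => hinj
  | n :: l => by
    haveI := tower_nontrivial B l
    rw [towerMap]
    exact liftQuad_injective _ (towerMap_injective A B f hf hinj l) _ _
      (by rw [map_sub, map_pow, (towerMap A B f hf l).2, map_intCast])

end WeylAux

noncomputable section

namespace WeylAux

open Polynomial

variable (k : Type) [Field k] [CharZero k]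

lemma coprime_pair {i j : ℤ} (hij : i ≠ j) :
    IsCoprime (X ^ 2 - C (i : k)) (X ^ 2 - C (j : k)) := by
  have hne : (j : k) - (i : k) ≠ 0 := by
    rw [sub_ne_zero]
    exact_mod_cast fun h => hij (by exact_mod_cast h.symm)
  refine ⟨C ((j : k) - (i : k))⁻¹, -C ((j : k) - (i : k))⁻¹, ?_⟩
  rw [neg_mul, ← sub_eq_add_neg, ← mul_sub]
  have : (X ^ 2 - C (i : k)) - (X ^ 2 - C (j : k)) = C ((j : k) - (i : k)) := by
    rw [map_sub]; ring
  rw [this, ← map_mul, inv_mul_cancel₀ hne, map_one]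

lemma squarefree_factor {j : ℤ} (hj : j ≠ 0) : Squarefree (X ^ 2 - C (j : k)) := by
  refine Polynomial.Separable.squarefree ?_
  exact Polynomial.separable_X_pow_sub_C (j : k) (by norm_num) (by exact_mod_cast hj)

lemma squarefree_prod (J : Finset ℤ) (hJ : 0 ∉ J) :
    Squarefree (∏ j ∈ J, (X ^ 2 - C (j : k))) := by
  classical
  induction J using Finset.induction_on with
  | empty => simpa using squarefree_one
  | @insert a J' ha ih =>
    rw [Finset.prod_insert ha]
    have h0a : a ≠ 0 := fun h => hJ (by simp [h])
    have h0J : 0 ∉ J' := fun h => hJ (Finset.mem_insert_of_mem h)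
    refine squarefree_mul_iff.mpr ⟨?_, squarefree_factor k h0a, ih h0J⟩
    refine IsCoprime.isRelPrime ?_
    refine IsCoprime.prod_right fun j hj => ?_
    exact coprime_pair k (fun h => ha (h ▸ hj))

lemma ratfunc_nonsquare (J : Finset ℤ) (hne : J.Nonempty) (hJ : 0 ∉ J) :
    ¬ IsSquare (∏ j ∈ J, ((RatFunc.X : RatFunc k) ^ 2 - (j : RatFunc k))) := by
  intro ⟨r, hr⟩
  set P : Polynomial k := ∏ j ∈ J, (X ^ 2 - C (j : k)) with hP
  have hmap : algebraMap (Polynomial k) (RatFunc k) P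
      = ∏ j ∈ J, ((RatFunc.X : RatFunc k) ^ 2 - (j : RatFunc k)) := by
    rw [hP, map_prod]
    refine Finset.prod_congr rfl fun j _ => ?_
    rw [map_sub, map_pow, RatFunc.algebraMap_X]
    congr 1
    rw [show C (j : k) = ((j : ℤ) : Polynomial k) from Polynomial.C_eq_intCast j, map_intCast]
  have hint : IsIntegral (Polynomial k) r := by
    refine ⟨X ^ 2 - C P, monic_X_pow_sub_C P (by norm_num), ?_⟩
    rw [eval₂_sub, eval₂_pow, eval₂_X, eval₂_C, hmap, hr, sub_eq_zero, sq]
  obtain ⟨s, hs⟩ := IsIntegrallyClosed.isIntegral_iff.mp hint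
  have hPs : P = s * s := by
    apply IsFractionRing.injective (Polynomial k) (RatFunc k)
    rw [hmap, hr, map_mul, hs]
  have hunit : IsUnit s := (squarefree_prod k J hJ) s (hPs ▸ dvd_rfl)
  have hPunit : IsUnit P := hPs ▸ hunit.mul hunit
  have hdeg : P.natDegree = 2 * J.card := by
    rw [hP, natDegree_prod _ _ (fun j _ => (monic_X_pow_sub_C _ (two_ne_zero)).ne_zero)]
    have hdd : ∀ j ∈ J, (X ^ 2 - C (j : k)).natDegree = 2 := fun j _ => natDegree_X_pow_sub_C
    rw [Finset.sum_congr rfl hdd, Finset.sum_const, smul_eq_mul, mul_comm]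
  have h0 := natDegree_eq_zero_of_isUnit hPunit
  rw [hdeg] at h0
  have hc : J.card ≠ 0 := Finset.card_ne_zero.mpr hne
  omega

end WeylAux

noncomputable section

namespace WeylAux

variable (k : Type) [Field k] [CharZero k]

/-- The base of the field tower: rational functions. -/
def ratBase : RingPt := ⟨RatFunc k, RatFunc.X⟩

lemma towerOf_injective (A : RingPt) [Nontrivial A.carrier] :
    ∀ l : List ℤ, Function.Injective (towerOf A l)
  | [] => fun _ _ h => h
  | n :: l => by
    haveI := tower_nontrivial A l
    rw [towerOf]
    intro a b hab
    exact towerOf_injective A l (of_injective _ hab)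

lemma tower_field_main :
    ∀ l : List ℤ, l.Nodup → (0 : ℤ) ∉ l →
      IsField (tower (ratBase k) l).carrier ∧
      ∀ J : Finset ℤ, J.Nonempty → (∀ j ∈ J, j ≠ 0 ∧ j ∉ l) →
        ¬ IsSquare (∏ j ∈ J,
          ((tower (ratBase k) l).pt ^ 2 - (j : (tower (ratBase k) l).carrier)))
  | [], _, _ => by
    constructor
    · exact Field.toIsField (RatFunc k)
    · intro J hne hJ
      have h0 : 0 ∉ J := fun h => (hJ 0 h).1 rfl
      exact ratfunc_nonsquare k J hne h0
  | n :: l, hnd, h0 => by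
    have hn0 : n ≠ 0 := fun h => h0 (by simp [h])
    have hnl : n ∉ l := (List.nodup_cons.mp hnd).1
    have h0l : (0 : ℤ) ∉ l := fun h => h0 (List.mem_cons_of_mem _ h)
    obtain ⟨hF, hQ⟩ := tower_field_main l (List.nodup_cons.mp hnd).2 h0l
    letI : Field (tower (ratBase k) l).carrier := hF.toField
    have hd : ¬ IsSquare ((tower (ratBase k) l).pt ^ 2
        - (n : (tower (ratBase k) l).carrier)) := by
      have := hQ {n} ⟨n, Finset.mem_singleton_self n⟩ (fun j hj => by
        rw [Finset.mem_singleton] at hj; subst hj; exact ⟨hn0, hnl⟩)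
      simpa using this
    haveI : Nontrivial (ratBase k).carrier := inferInstanceAs (Nontrivial (RatFunc k))
    have htwo : (2 : (tower (ratBase k) l).carrier) ≠ 0 := by
      intro h2
      have he : towerOf (ratBase k) l (2 : RatFunc k)
          = towerOf (ratBase k) l (0 : RatFunc k) := by
        exact (map_ofNat (towerOf (ratBase k) l) 2).trans (h2.trans (map_zero _).symm)
      have h2' : (2 : RatFunc k) = 0 := towerOf_injective (ratBase k) l he
      have h3 : (algebraMap (Polynomial k) (RatFunc k)) 2 = algebraMap _ _ 0 := by
        rw [map_ofNat, map_zero]; exact h2'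
      have h4 := IsFractionRing.injective (Polynomial k) (RatFunc k) h3
      norm_num at h4
    constructor
    · exact isField_adjoinRoot_quad hd
    · intro J hne hJ hsq
      have hof : (∏ j ∈ J, ((tower (ratBase k) (n :: l)).pt ^ 2
            - (j : (tower (ratBase k) (n :: l)).carrier)))
          = AdjoinRoot.of _ (∏ j ∈ J, ((tower (ratBase k) l).pt ^ 2
            - (j : (tower (ratBase k) l).carrier))) := by
        rw [map_prod]
        refine Finset.prod_congr rfl fun j _ => ?_
        show _ = AdjoinRoot.of _ _
        rw [map_sub, map_pow, map_intCast]
        rfl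
      rw [hof] at hsq
      rcases isSquare_of_quad htwo hsq with h | h
      · exact hQ J hne (fun j hj => ⟨(hJ j hj).1,
          fun hl => (hJ j hj).2 (List.mem_cons_of_mem _ hl)⟩) h
      · have hnJ : n ∉ J := fun hh => (hJ n hh).2 (List.mem_cons_self)
        have hins : (∏ j ∈ insert n J, ((tower (ratBase k) l).pt ^ 2
              - (j : (tower (ratBase k) l).carrier)))
            = (∏ j ∈ J, ((tower (ratBase k) l).pt ^ 2
              - (j : (tower (ratBase k) l).carrier)))
              * ((tower (ratBase k) l).pt ^ 2 - (n : (tower (ratBase k) l).carrier)) := by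
          rw [Finset.prod_insert hnJ]; ring
        refine hQ (insert n J) ⟨n, Finset.mem_insert_self n J⟩ (fun j hj => ?_) ?_
        · rcases Finset.mem_insert.mp hj with rfl | hj'
          · exact ⟨hn0, hnl⟩
          · exact ⟨(hJ j hj').1, fun hl => (hJ j hj').2 (List.mem_cons_of_mem _ hl)⟩
        · rw [hins]; exact h
      
end WeylAux

noncomputable section

namespace WeylAux

open MvPolynomial

variable (k : Type) [Field k] [CharZero k]

/-- The base of the polynomial tower. -/
def polyBase : RingPt := ⟨Polynomial k, Polynomial.X⟩

lemma towerOf_pt (A : RingPt) : ∀ l : List ℤ, (tower A l).pt = towerOf A l A.pt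
  | [] => rfl
  | n :: l => by
    show AdjoinRoot.of _ (tower A l).pt = AdjoinRoot.of _ (towerOf A l A.pt)
    rw [towerOf_pt A l]

lemma tower_poly_domain (l : List ℤ) (hnd : l.Nodup) (h0 : (0 : ℤ) ∉ l) :
    IsDomain (tower (polyBase k) l).carrier := by
  haveI : Nontrivial (ratBase k).carrier := inferInstanceAs (Nontrivial (RatFunc k))
  have hf : (algebraMap (Polynomial k) (RatFunc k)) (polyBase k).pt = (ratBase k).pt :=
    RatFunc.algebraMap_X
  have hinj : Function.Injective (algebraMap (Polynomial k) (RatFunc k)) :=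
    IsFractionRing.injective _ _
  have hmap := towerMap_injective (polyBase k) (ratBase k) _ hf hinj l
  letI : Field (tower (ratBase k) l).carrier := (tower_field_main k l hnd h0).1.toField
  exact Function.Injective.isDomain _ hmap

/-- The ideal of relations restricted to indices in `0 :: l`. -/
def Idl (l : List ℤ) : Ideal (MvPolynomial ℤ k) :=
  Ideal.span { p : MvPolynomial ℤ k |
    ∃ m n : ℤ, m ∈ ((0 : ℤ) :: l) ∧ n ∈ ((0 : ℤ) :: l) ∧
      p = X n ^ 2 + (n : MvPolynomial ℤ k) - X m ^ 2 - (m : MvPolynomial ℤ k) }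

lemma rel_mk (l₀ : List ℤ) {n : ℤ} (hn : n ∈ ((0 : ℤ) :: l₀)) :
    (Ideal.Quotient.mk (Idl k l₀) (X n)) ^ 2
      = (Ideal.Quotient.mk (Idl k l₀) (X 0)) ^ 2 - (n : MvPolynomial ℤ k ⧸ Idl k l₀) := by
  have hmem : (X n ^ 2 + (n : MvPolynomial ℤ k) - X 0 ^ 2 - ((0 : ℤ) : MvPolynomial ℤ k))
      ∈ Idl k l₀ := by
    apply Ideal.subset_span
    exact ⟨0, n, List.mem_cons_self, hn, rfl⟩
  have := Ideal.Quotient.eq_zero_iff_mem.mpr hmem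
  rw [map_sub, map_sub, map_add, map_pow, map_pow, map_intCast, map_intCast] at this
  push_cast at this ⊢
  linear_combination this

/-- The inverse map from the tower into the quotient ring. -/
def psi (l₀ : List ℤ) : (l : List ℤ) → (∀ i ∈ l, i ∈ l₀) →
    { g : (tower (polyBase k) l).carrier →+* MvPolynomial ℤ k ⧸ Idl k l₀ //
      (∀ p : Polynomial k, g (towerOf (polyBase k) l p)
        = Polynomial.eval₂ ((Ideal.Quotient.mk (Idl k l₀)).comp MvPolynomial.C)
            (Ideal.Quotient.mk (Idl k l₀) (X 0)) p) ∧
      ∀ i (h : i ∈ l), g (rootEl (polyBase k) l i h) = Ideal.Quotient.mk (Idl k l₀) (X i) }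
  | [], _ => ⟨Polynomial.eval₂RingHom ((Ideal.Quotient.mk (Idl k l₀)).comp MvPolynomial.C)
      (Ideal.Quotient.mk (Idl k l₀) (X 0)), fun p => rfl, fun i h => absurd h List.not_mem_nil⟩
  | n :: l, hmem => by
    obtain ⟨g, hg1, hg2⟩ := psi l₀ l (fun i hi => hmem i (List.mem_cons_of_mem _ hi))
    have hn : n ∈ ((0 : ℤ) :: l₀) := List.mem_cons_of_mem _ (hmem n (List.mem_cons_self))
    have hroot : Polynomial.eval₂ g (Ideal.Quotient.mk (Idl k l₀) (X n))
        (quad ((tower (polyBase k) l).pt ^ 2 - (n : (tower (polyBase k) l).carrier))) = 0 := by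
      have hq : quad ((tower (polyBase k) l).pt ^ 2 - (n : (tower (polyBase k) l).carrier))
          = Polynomial.X ^ 2
            - Polynomial.C ((tower (polyBase k) l).pt ^ 2
              - (n : (tower (polyBase k) l).carrier)) := rfl
      rw [hq, Polynomial.eval₂_sub, Polynomial.eval₂_pow, Polynomial.eval₂_X, Polynomial.eval₂_C]
      rw [map_sub, map_pow, map_intCast]
      rw [towerOf_pt (polyBase k) l, hg1 (polyBase k).pt]
      have hpt : Polynomial.eval₂ ((Ideal.Quotient.mk (Idl k l₀)).comp MvPolynomial.C)
          (Ideal.Quotient.mk (Idl k l₀) (X 0)) (polyBase k).pt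
          = Ideal.Quotient.mk (Idl k l₀) (X 0) := Polynomial.eval₂_X _ _
      rw [hpt, rel_mk k l₀ hn]
      ring
    refine ⟨AdjoinRoot.lift g (Ideal.Quotient.mk (Idl k l₀) (X n)) hroot, ?_, ?_⟩
    · intro p
      show AdjoinRoot.lift g _ hroot (AdjoinRoot.of _ (towerOf (polyBase k) l p)) = _
      rw [AdjoinRoot.lift_of]
      exact hg1 p
    · intro i h
      by_cases hi : i = n
      · subst hi
        show AdjoinRoot.lift g _ hroot (if hi : i = i then AdjoinRoot.root _
          else AdjoinRoot.of _ (rootEl (polyBase k) l i _)) = _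
        rw [dif_pos rfl, AdjoinRoot.lift_root]
      · show AdjoinRoot.lift g _ hroot (if hi' : i = n then AdjoinRoot.root _
          else AdjoinRoot.of _ (rootEl (polyBase k) l i _)) = _
        rw [dif_neg hi, AdjoinRoot.lift_of]
        exact hg2 i _

end WeylAux

noncomputable section

namespace WeylAux

open MvPolynomial

variable (k : Type) [Field k] [CharZero k]

lemma idl_isPrime (l : List ℤ) (hnd : l.Nodup) (h0 : (0 : ℤ) ∉ l) : (Idl k l).IsPrime := by
  classical
  set Q := MvPolynomial ℤ k ⧸ Idl k l
  set W := MvPolynomial ℤ (tower (polyBase k) l).carrier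
  -- the map φ
  set cst : k →+* W := (MvPolynomial.C (σ := ℤ)).comp
    ((towerOf (polyBase k) l).comp (Polynomial.C)) with hcst
  set v : ℤ → W := fun i =>
    if h : i ∈ l then MvPolynomial.C (rootEl (polyBase k) l i h)
    else if i = 0 then MvPolynomial.C (tower (polyBase k) l).pt
    else X i with hv
  set φ : MvPolynomial ℤ k →+* W := MvPolynomial.eval₂Hom cst v with hφ
  have hvsq : ∀ i : ℤ, i ∈ ((0 : ℤ) :: l) →
      (v i) ^ 2 = MvPolynomial.C ((tower (polyBase k) l).pt ^ 2) - (i : W) := by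
    intro i hi
    rcases List.mem_cons.mp hi with rfl | hil
    · rw [hv]
      simp only [dif_neg h0]
      simp only [if_true]
      rw [← map_pow]
      push_cast
      ring
    · rw [hv]
      simp only [dif_pos hil]
      rw [← map_pow, rootEl_sq, map_sub, map_pow, map_intCast]
  have hker : ∀ p ∈ { p : MvPolynomial ℤ k |
      ∃ m n : ℤ, m ∈ ((0 : ℤ) :: l) ∧ n ∈ ((0 : ℤ) :: l) ∧
        p = X n ^ 2 + (n : MvPolynomial ℤ k) - X m ^ 2 - (m : MvPolynomial ℤ k) },
      φ p = 0 := by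
    rintro p ⟨m, n, hm, hn, rfl⟩
    rw [map_sub, map_sub, map_add, map_pow, map_pow, map_intCast, map_intCast]
    have hXn : φ (X n) = v n := MvPolynomial.eval₂Hom_X' cst v n
    have hXm : φ (X m) = v m := MvPolynomial.eval₂Hom_X' cst v m
    rw [hXn, hXm, hvsq n hn, hvsq m hm]
    ring
  have hle : Idl k l ≤ RingHom.ker φ := by
    rw [Idl, Ideal.span_le]
    intro p hp
    exact hker p hp
  set φbar : Q →+* W := Ideal.Quotient.lift (Idl k l) φ (fun a ha => hle ha) with hφbar
  obtain ⟨g, hg1, hg2⟩ := psi k l l (fun i hi => hi)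
  set ψW : W →+* Q := MvPolynomial.eval₂Hom g (fun i => Ideal.Quotient.mk (Idl k l) (X i))
    with hψW
  have hcomp : ∀ r : MvPolynomial ℤ k,
      ψW (φ r) = Ideal.Quotient.mk (Idl k l) r := by
    intro r
    have : ψW.comp φ = (Ideal.Quotient.mk (Idl k l)) := by
      apply MvPolynomial.ringHom_ext
      · intro a
        rw [RingHom.comp_apply]
        have h1 : φ (MvPolynomial.C a) = cst a := MvPolynomial.eval₂Hom_C cst v a
        rw [h1, hcst]
        show ψW (MvPolynomial.C (towerOf (polyBase k) l (Polynomial.C a))) = _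
        have h2 : ψW (MvPolynomial.C (towerOf (polyBase k) l (Polynomial.C a)))
            = g (towerOf (polyBase k) l (Polynomial.C a)) :=
          MvPolynomial.eval₂Hom_C _ _ _
        rw [h2, hg1, Polynomial.eval₂_C]
        rfl
      · intro i
        rw [RingHom.comp_apply]
        have h1 : φ (X i) = v i := MvPolynomial.eval₂Hom_X' cst v i
        rw [h1, hv]
        by_cases hil : i ∈ l
        · simp only [dif_pos hil]
          have h2 : ψW (MvPolynomial.C (rootEl (polyBase k) l i hil))
              = g (rootEl (polyBase k) l i hil) := MvPolynomial.eval₂Hom_C _ _ _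
          rw [h2, hg2]
        · simp only [dif_neg hil]
          by_cases hi0 : i = 0
          · subst hi0
            rw [if_pos rfl]
            have h2 : ψW (MvPolynomial.C (tower (polyBase k) l).pt)
                = g (tower (polyBase k) l).pt := MvPolynomial.eval₂Hom_C _ _ _
            rw [h2, towerOf_pt (polyBase k) l]; erw [hg1]
            exact Polynomial.eval₂_X _ _
          · simp only [if_neg hi0]
            exact MvPolynomial.eval₂Hom_X' _ _ i
    calc ψW (φ r) = (ψW.comp φ) r := rfl
      _ = _ := by rw [this]
  have hinj : Function.Injective φbar := by
    intro a b hab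
    obtain ⟨ra, rfl⟩ := Ideal.Quotient.mk_surjective a
    obtain ⟨rb, rfl⟩ := Ideal.Quotient.mk_surjective b
    have ha : φbar (Ideal.Quotient.mk (Idl k l) ra) = φ ra := rfl
    have hb : φbar (Ideal.Quotient.mk (Idl k l) rb) = φ rb := rfl
    rw [← hcomp ra, ← hcomp rb]
    rw [ha, hb] at hab
    rw [hab]
  haveI : IsDomain (tower (polyBase k) l).carrier := tower_poly_domain k l hnd h0
  haveI : IsDomain W := inferInstanceAs (IsDomain (MvPolynomial ℤ (tower (polyBase k) l).carrier))
  haveI : IsDomain Q := Function.Injective.isDomain φbar hinj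
  exact (Ideal.Quotient.isDomain_iff_prime (Idl k l)).mp ‹IsDomain Q›

end WeylAux

noncomputable section

namespace WeylAux

open MvPolynomial

variable (k : Type) [Field k] [CharZero k]

lemma exists_idl (T : Finset (MvPolynomial ℤ k))
    (hT : ↑T ⊆ { p : MvPolynomial ℤ k | ∃ m n : ℤ,
      p = X n ^ 2 + (n : MvPolynomial ℤ k) - X m ^ 2 - (m : MvPolynomial ℤ k) }) :
    ∃ l : List ℤ, l.Nodup ∧ (0 : ℤ) ∉ l ∧ Ideal.span (T : Set (MvPolynomial ℤ k)) ≤ Idl k l := by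
  classical
  have hch : ∀ p : T, ∃ m n : ℤ,
      (p : MvPolynomial ℤ k) = X n ^ 2 + (n : MvPolynomial ℤ k) - X m ^ 2
        - (m : MvPolynomial ℤ k) := fun p => hT (Finset.mem_coe.mpr p.2)
  choose fm fn hfmn using hch
  set S : Finset ℤ := T.attach.biUnion (fun p => {fm p, fn p}) with hS
  set l : List ℤ := (S.erase 0).toList with hl
  have hnd : l.Nodup := Finset.nodup_toList _
  have h0 : (0 : ℤ) ∉ l := by
    intro h
    rw [hl, Finset.mem_toList] at h
    exact (Finset.mem_erase.mp h).1 rfl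
  have hSl : ∀ i ∈ S, i ∈ ((0 : ℤ) :: l) := by
    intro i hi
    by_cases hi0 : i = 0
    · subst hi0; exact List.mem_cons_self
    · exact List.mem_cons_of_mem _ (by
        rw [hl, Finset.mem_toList]
        exact Finset.mem_erase.mpr ⟨hi0, hi⟩)
  refine ⟨l, hnd, h0, ?_⟩
  rw [Ideal.span_le]
  intro p hp
  have hpT : p ∈ T := hp
  have hm : fm ⟨p, hpT⟩ ∈ S := by
    rw [hS]
    exact Finset.mem_biUnion.mpr ⟨⟨p, hpT⟩, Finset.mem_attach _ _,
      Finset.mem_insert_self _ _⟩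
  have hn : fn ⟨p, hpT⟩ ∈ S := by
    rw [hS]
    refine Finset.mem_biUnion.mpr ⟨⟨p, hpT⟩, Finset.mem_attach _ _, ?_⟩
    exact Finset.mem_insert.mpr (Or.inr (Finset.mem_singleton_self _))
  refine Ideal.subset_span ?_
  exact ⟨fm ⟨p, hpT⟩, fn ⟨p, hpT⟩, hSl _ hm, hSl _ hn, hfmn ⟨p, hpT⟩⟩

lemma span_rel_isPrime : (Ideal.span { p : MvPolynomial ℤ k |
    ∃ m n : ℤ, p = X n ^ 2 + (n : MvPolynomial ℤ k)
      - X m ^ 2 - (m : MvPolynomial ℤ k) }).IsPrime := by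
  set gens := { p : MvPolynomial ℤ k | ∃ m n : ℤ,
    p = X n ^ 2 + (n : MvPolynomial ℤ k) - X m ^ 2 - (m : MvPolynomial ℤ k) } with hgens
  have hIdl_le : ∀ l : List ℤ, Idl k l ≤ Ideal.span gens := by
    intro l
    rw [Idl, Ideal.span_le]
    rintro p ⟨m, n, _, _, rfl⟩
    exact Ideal.subset_span ⟨m, n, rfl⟩
  constructor
  · intro htop
    rw [Ideal.eq_top_iff_one] at htop
    obtain ⟨T, hTsub, hmem⟩ := Submodule.mem_span_finite_of_mem_span htop
    obtain ⟨l, hnd, h0, hle⟩ := exists_idl k T hTsub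
    have h1 : (1 : MvPolynomial ℤ k) ∈ Idl k l := hle hmem
    exact (idl_isPrime k l hnd h0).ne_top (Ideal.eq_top_iff_one _ |>.mpr h1)
  · intro p q hpq
    obtain ⟨T, hTsub, hmem⟩ := Submodule.mem_span_finite_of_mem_span hpq
    obtain ⟨l, hnd, h0, hle⟩ := exists_idl k T hTsub
    have hpq' : p * q ∈ Idl k l := hle hmem
    rcases (idl_isPrime k l hnd h0).mem_or_mem hpq' with h | h
    · exact Or.inl (hIdl_le l h)
    · exact Or.inr (hIdl_le l h)

end WeylAux


end
end
end
end
end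
end
end
end


open scoped symmDiff

noncomputable section

/-- The ring `C = k[x_n : n ∈ ℤ] / (x_n² + n = x_m² + m)`. -/
abbrev WeylC (k : Type) [Field k] : Type :=
  MvPolynomial ℤ k ⧸ Ideal.span { p : MvPolynomial ℤ k |
    ∃ m n : ℤ, p = MvPolynomial.X n ^ 2 + (n : MvPolynomial ℤ k)
      - MvPolynomial.X m ^ 2 - (m : MvPolynomial ℤ k) }

variable (k : Type) [Field k]

/-- The generator `x_n` of `C`. -/
def xC (n : ℤ) : WeylC k := Ideal.Quotient.mk _ (MvPolynomial.X n)

/-- `x_I := ∏_{i ∈ I} x_i` for a finite subset `I ⊆ ℤ` (with `x_∅ = 1`). -/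
def xS (I : Finset ℤ) : WeylC k := ∏ i ∈ I, xC k i

/-- The identity component `C_∅ = k[x_0²]`. -/
def Cphi : Subalgebra k (WeylC k) := Algebra.adjoin k {xC k 0 ^ 2}

/-- The homogeneous component `C_I = C_∅ · x_I` of the `ℤ_fin`-grading on `C`. -/
def Cgrade (I : Finset ℤ) : Submodule k (WeylC k) :=
  (Cphi k).toSubmodule.map (LinearMap.mulRight k (xS k I))

variable [CharZero k]

/-- `C = k[x_n : n ∈ ℤ]/(x_n² + n = x_m² + m)` is an integral
domain. -/
theorem weylC_isDomain : IsDomain (WeylC k) :=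
  (Ideal.Quotient.isDomain_iff_prime _).mpr (WeylAux.span_rel_isPrime k)
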